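/- arXiv:1603.01179 — 7 statements merged into one kernel-verified Lean document; each statement's English description precedes it below -/
import Mathlib

section
/- Every connected AT-free graph is 1-laminar; that is, every connected graph containing no asteroidal triple has a diametral path μ such that every vertex of the graph is at distance at most 1 from some vertex of μ. -/
open SimpleGraph

/-- A walk `p` is a diametral path: a shortest path between two vertices at distance `diam G`. -/
def IsDiametralPath {V : Type*} (G : SimpleGraph V) {u v : V} (p : G.Walk u v) : Prop :=
  p.length = G.dist u v ∧ G.dist u v = G.diam

/-- A walk `p` is `k`-dominating: every vertex of `G` is at distance at most `k`
from some vertex of `p`. -/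
def IsKDominating {V : Type*} (G : SimpleGraph V) (k : ℕ) {u v : V} (p : G.Walk u v) : Prop :=
  ∀ x : V, ∃ y ∈ p.support, G.dist x y ≤ k

/-- `G` is `k`-laminar: it has a `k`-dominating diametral path. -/
def KLaminar {V : Type*} (G : SimpleGraph V) (k : ℕ) : Prop :=
  ∃ (u v : V) (p : G.Walk u v), IsDiametralPath G p ∧ IsKDominating G k p

/-- There is a walk from `a` to `b` avoiding the closed neighborhood of `c`. -/
def WalkAvoiding {V : Type*} (G : SimpleGraph V) (a b c : V) : Prop :=
  ∃ p : G.Walk a b, ∀ x ∈ p.support, x ≠ c ∧ ¬ G.Adj c x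

/-- `(a, b, c)` is an asteroidal triple of `G`: three pairwise distinct nonadjacent vertices
such that any two of them are joined by a path avoiding the closed neighborhood of the third. -/
def IsAsteroidalTriple {V : Type*} (G : SimpleGraph V) (a b c : V) : Prop :=
  a ≠ b ∧ a ≠ c ∧ b ≠ c ∧ ¬ G.Adj a b ∧ ¬ G.Adj a c ∧ ¬ G.Adj b c ∧
    WalkAvoiding G a b c ∧ WalkAvoiding G a c b ∧ WalkAvoiding G b c a

/-- `G` is AT-free if it contains no asteroidal triple. -/
def ATFree {V : Type*} (G : SimpleGraph V) : Prop :=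
  ∀ a b c : V, ¬ IsAsteroidalTriple G a b c

namespace ATFreeOneLaminar

variable {V : Type*} [Fintype V] {G : SimpleGraph V}

open Classical in
/-- The (finite) set of vertices at distance at least 2 from every vertex of the walk `p`. -/
noncomputable def und (G : SimpleGraph V) {a b : V} (p : G.Walk a b) : Finset V :=
  Finset.univ.filter (fun x => ∀ w ∈ p.support, 2 ≤ G.dist x w)

lemma mem_und {a b : V} {p : G.Walk a b} {x : V} :
    x ∈ und G p ↔ ∀ w ∈ p.support, 2 ≤ G.dist x w := by
  simp [und]

lemma dist_le_one_of_adj {a b : V} (h : G.Adj a b) : G.dist a b ≤ 1 := by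
  have := SimpleGraph.dist_le (Walk.cons h Walk.nil)
  simpa using this

lemma far_pair {c x : V} (h : 2 ≤ G.dist c x) : x ≠ c ∧ ¬ G.Adj c x := by
  constructor
  · rintro rfl
    simp [SimpleGraph.dist_self] at h
  · intro hadj
    have := dist_le_one_of_adj hadj
    omega

lemma exists_walk_le_one (hconn : G.Connected) {a b : V} (h : G.dist a b ≤ 1) :
    ∃ p : G.Walk a b, ∀ x ∈ p.support, x = a ∨ x = b := by
  obtain ⟨p, hp⟩ := hconn.exists_walk_length_eq_dist a b
  refine ⟨p, ?_⟩
  have hl : p.length ≤ 1 := by omega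
  cases p with
  | nil =>
    intro x hx
    simp at hx
    exact Or.inl hx
  | cons hadj q =>
    cases q with
    | nil =>
      intro x hx
      simp [Walk.support_cons, Walk.support_nil] at hx
      tauto
    | cons h2 q2 =>
      simp [Walk.length_cons] at hl

lemma dist_split {a b x : V} (p : G.Walk a b) (hx : x ∈ p.support) :
    G.dist a x + G.dist x b ≤ p.length := by
  classical
  have hspec := p.take_spec hx
  have hlen : (p.takeUntil x hx).length + (p.dropUntil x hx).length = p.length := by
    rw [← Walk.length_append, hspec]
  have h1 := SimpleGraph.dist_le (p.takeUntil x hx)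
  have h2 := SimpleGraph.dist_le (p.dropUntil x hx)
  omega

lemma ediam_ne_top (hconn : G.Connected) : G.ediam ≠ ⊤ := by
  have hnonempty : Nonempty V := hconn.nonempty
  obtain ⟨a, b, hab⟩ := SimpleGraph.exists_edist_eq_ediam_of_finite (G := G)
  rw [← hab]
  exact SimpleGraph.edist_ne_top_iff_reachable.mpr (hconn a b)

/-- The core lemma: if `P` is a diametral path minimizing the number of undominated
vertices, `z` is undominated by `P`, and every walk from `u` to `z` meets the closed
neighborhood of `v`, we reach a contradiction. -/
lemma engine (hconn : G.Connected) (hAT : ATFree G)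
    {u v : V} (P : G.Walk u v)
    (hPlen : P.length = G.dist u v) (hPdiam : G.dist u v = G.diam)
    (hmin : ∀ (c d : V) (q : G.Walk c d), q.length = G.dist c d → G.dist c d = G.diam →
      (und G P).card ≤ (und G q).card)
    {z : V} (hz : z ∈ und G P)
    (hA : ¬ WalkAvoiding G u z v) : False := by
  classical
  have hzP : ∀ w ∈ P.support, 2 ≤ G.dist z w := mem_und.mp hz
  have hne : G.ediam ≠ ⊤ := ediam_ne_top hconn
  have hdle : ∀ a b : V, G.dist a b ≤ G.diam := fun a b => SimpleGraph.dist_le_diam hne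
  have hD2 : 2 ≤ G.diam := le_trans (hzP u P.start_mem_support) (hdle z u)
  -- Base: the distance from u to z equals the diameter.
  obtain ⟨σ0, hσ0⟩ := hconn.exists_walk_length_eq_dist u z
  have hbase : G.dist u z = G.diam := by
    have hhit : ∃ x ∈ σ0.support, G.dist v x ≤ 1 := by
      by_contra hcon
      push_neg at hcon
      exact hA ⟨σ0, fun x hx => far_pair (by have := hcon x hx; omega)⟩
    obtain ⟨x, hxmem, hvx⟩ := hhit
    have h1 : G.dist u x + G.dist x z ≤ σ0.length := dist_split σ0 hxmem
    rw [hσ0] at h1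
    have h2 : G.dist u v ≤ G.dist u x + G.dist x v := hconn.dist_triangle
    have h3 : G.dist x v ≤ 1 := by rw [SimpleGraph.dist_comm]; exact hvx
    have h4 : 1 ≤ G.dist x z := by
      have hxz : x ≠ z := by
        intro hxz0
        have hzv := hzP v P.end_mem_support
        rw [SimpleGraph.dist_comm] at hvx
        rw [hxz0] at hvx
        omega
      have := hconn.pos_dist_of_ne hxz
      omega
    have h5 := hdle u z
    omega
  -- Pigeonhole: any diametral walk ending at z has a vertex undominated by it
  -- but dominated by P.
  have hPne : (und G P).Nonempty := ⟨z, hz⟩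
  have pigeon : ∀ (c : V) (q : G.Walk c z), q.length = G.dist c z → G.dist c z = G.diam →
      ∃ b : V, (∀ w ∈ q.support, 2 ≤ G.dist b w) ∧ (∃ w ∈ P.support, G.dist b w ≤ 1) := by
    intro c q hql hqd
    by_contra hcon
    push_neg at hcon
    have hsub : und G q ⊆ (und G P).erase z := by
      intro y hy
      have hy' := mem_und.mp hy
      have hyP : y ∈ und G P := mem_und.mpr (fun w hw => by have := hcon y hy' w hw; omega)
      refine Finset.mem_erase.mpr ⟨?_, hyP⟩
      intro hyz
      have h2z := hy' z q.end_mem_support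
      rw [hyz] at h2z
      simp [SimpleGraph.dist_self] at h2z
    have hle := hmin c z q hql hqd
    have hcard := Finset.card_le_card hsub
    rw [Finset.card_erase_of_mem hz] at hcard
    have hpos : 0 < (und G P).card := Finset.card_pos.mpr hPne
    omega
  -- The step of the chain construction.
  have step : ∀ (a : V) (Ya : G.Walk a z), G.dist a z = G.diam → Ya.length = G.diam →
      (∃ w ∈ P.support, G.dist a w ≤ 1) →
      ∃ (b : V) (Yb : G.Walk b z), G.dist b z = G.diam ∧ Yb.length = G.diam ∧
        (∃ w ∈ P.support, G.dist b w ≤ 1) ∧ (∀ x ∈ Ya.support, 2 ≤ G.dist b x) ∧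
        ¬ WalkAvoiding G z b a := by
    intro a Ya hadist halen hanear
    obtain ⟨wa, hwaP, hwa⟩ := hanear
    obtain ⟨b, hbfar, hbnear⟩ := pigeon a Ya (by rw [halen, hadist]) hadist
    have hba : 2 ≤ G.dist b a := hbfar a Ya.start_mem_support
    have hbz : 2 ≤ G.dist b z := hbfar z Ya.end_mem_support
    obtain ⟨wb, hwbP, hwb⟩ := hbnear
    -- A walk from a to b through P, avoiding the closed neighborhood of z.
    obtain ⟨W1, hW1⟩ := exists_walk_le_one hconn hwa
    obtain ⟨W4r, hW4r⟩ := exists_walk_le_one hconn hwb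
    let W : G.Walk a b :=
      W1.append (((P.takeUntil wa hwaP).reverse).append ((P.takeUntil wb hwbP).append W4r.reverse))
    have hWavoid : ∀ x ∈ W.support, x ≠ z ∧ ¬ G.Adj z x := by
      intro x hx
      refine far_pair ?_
      rcases (Walk.mem_support_append_iff _ _).mp hx with h1 | hx
      · rcases hW1 x h1 with rfl | rfl
        · rw [SimpleGraph.dist_comm]; omega
        · exact hzP x hwaP
      · rcases (Walk.mem_support_append_iff _ _).mp hx with h2 | hx
        · rw [Walk.support_reverse, List.mem_reverse] at h2
          exact hzP x (Walk.support_takeUntil_subset _ _ h2)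
        · rcases (Walk.mem_support_append_iff _ _).mp hx with h3 | h4
          · exact hzP x (Walk.support_takeUntil_subset _ _ h3)
          · rw [Walk.support_reverse, List.mem_reverse] at h4
            rcases hW4r x h4 with rfl | rfl
            · rw [SimpleGraph.dist_comm]; omega
            · exact hzP x hwbP
    have hWA2 : WalkAvoiding G a b z := ⟨W, hWavoid⟩
    have hWA1 : WalkAvoiding G a z b := ⟨Ya, fun x hx => far_pair (hbfar x hx)⟩
    have hH : ¬ WalkAvoiding G z b a := by
      intro hWA3
      have hfa : z ≠ a ∧ ¬ G.Adj a z := far_pair (show 2 ≤ G.dist a z by omega)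
      have hfb : b ≠ a ∧ ¬ G.Adj a b :=
        far_pair (show 2 ≤ G.dist a b by rw [SimpleGraph.dist_comm]; exact hba)
      have hfz : b ≠ z ∧ ¬ G.Adj z b :=
        far_pair (show 2 ≤ G.dist z b by rw [SimpleGraph.dist_comm]; exact hbz)
      exact hAT a z b ⟨hfa.1.symm, hfb.1.symm, hfz.1.symm, hfa.2, hfb.2, hfz.2, hWA1, hWA2, hWA3⟩
    -- The hitting lemma: the distance from b to z equals the diameter.
    obtain ⟨σ, hσ⟩ := hconn.exists_walk_length_eq_dist b z
    have hhit : ∃ x ∈ σ.support, G.dist a x ≤ 1 := by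
      by_contra hcon
      push_neg at hcon
      refine hH ⟨σ.reverse, ?_⟩
      intro x hx
      rw [Walk.support_reverse, List.mem_reverse] at hx
      exact far_pair (by have := hcon x hx; omega)
    obtain ⟨x, hxσ, hax⟩ := hhit
    have h1 : G.dist b x + G.dist x z ≤ σ.length := dist_split σ hxσ
    rw [hσ] at h1
    have h2 : G.dist a z ≤ G.dist a x + G.dist x z := hconn.dist_triangle
    have h4 : 1 ≤ G.dist b x := by
      have hxb : x ≠ b := by
        intro hxb0
        rw [hxb0] at hax
        rw [SimpleGraph.dist_comm] at hax
        omega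
      have := hconn.pos_dist_of_ne (Ne.symm hxb)
      omega
    have h5 := hdle b z
    have hbdist : G.dist b z = G.diam := by omega
    exact ⟨b, σ, hbdist, by rw [hσ, hbdist], ⟨wb, hwbP, hwb⟩, hbfar, hH⟩
  -- The chain construction.
  have chain : ∀ n : ℕ, ∃ Y : ℕ → (Σ c : V, G.Walk c z),
      (∀ k, G.dist (Y k).1 z = G.diam ∧ (Y k).2.length = G.diam ∧
        ∃ w ∈ P.support, G.dist (Y k).1 w ≤ 1) ∧
      (∀ j k, j < k → k ≤ n → ∀ x ∈ (Y j).2.support, 2 ≤ G.dist (Y k).1 x) := by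
    intro n
    induction n with
    | zero =>
      refine ⟨fun _ => ⟨u, σ0⟩, fun k => ⟨hbase, by rw [hσ0]; exact hbase,
        u, P.start_mem_support, by simp [SimpleGraph.dist_self]⟩, ?_⟩
      intro j k hjk hk0
      omega
    | succ n ih =>
      obtain ⟨Y, hY1, hY2⟩ := ih
      obtain ⟨b, Yb, hb1, hb2, hb3, hbfar, hH⟩ :=
        step (Y n).1 (Y n).2 (hY1 n).1 (hY1 n).2.1 (hY1 n).2.2
      refine ⟨fun k => if hk : k ≤ n then Y k else ⟨b, Yb⟩, ?_, ?_⟩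
      · intro k
        dsimp only
        by_cases hk : k ≤ n
        · rw [dif_pos hk]
          exact hY1 k
        · rw [dif_neg hk]
          exact ⟨hb1, hb2, hb3⟩
      · intro j k hjk hk
        dsimp only
        by_cases hkn : k ≤ n
        · have hjn : j ≤ n := by omega
          rw [dif_pos hkn, dif_pos hjn]
          exact hY2 j k hjk hkn
        · have hjn : j ≤ n := by omega
          rw [dif_neg hkn, dif_pos hjn]
          dsimp only
          by_cases hjeq : j = n
          · subst hjeq
            exact hbfar
          · have hjlt : j < n := by omega
            intro x hxmem
            by_contra hcon
            push_neg at hcon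
            have hbx : G.dist x b ≤ 1 := by rw [SimpleGraph.dist_comm]; omega
            obtain ⟨Wxb, hWxb⟩ := exists_walk_le_one hconn hbx
            refine hH ⟨(((Y j).2.dropUntil x hxmem).reverse).append Wxb, ?_⟩
            intro y hy
            refine far_pair ?_
            rcases (Walk.mem_support_append_iff _ _).mp hy with h1 | h2
            · rw [Walk.support_reverse, List.mem_reverse] at h1
              exact hY2 j n hjlt le_rfl y (Walk.support_dropUntil_subset _ _ h1)
            · rcases hWxb y h2 with rfl | rfl
              · exact hY2 j n hjlt le_rfl y hxmem
              · have := hbfar (Y n).1 (Y n).2.start_mem_support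
                rw [SimpleGraph.dist_comm] at this
                exact this
  -- An infinite chain gives infinitely many distinct vertices: contradiction.
  obtain ⟨Y, hY1, hY2⟩ := chain (Fintype.card V)
  have hinj : Function.Injective (fun k : Fin (Fintype.card V + 1) => (Y k.1).1) := by
    intro k1 k2 heq
    dsimp only at heq
    by_contra hne12
    have hne' : k1.1 ≠ k2.1 := fun h => hne12 (Fin.ext h)
    rcases Nat.lt_trichotomy k1.1 k2.1 with h | h | h
    · have hfar := hY2 k1.1 k2.1 h (by omega) (Y k1.1).1 (Y k1.1).2.start_mem_support
      rw [← heq] at hfar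
      simp [SimpleGraph.dist_self] at hfar
    · exact hne' h
    · have hfar := hY2 k2.1 k1.1 h (by omega) (Y k2.1).1 (Y k2.1).2.start_mem_support
      rw [heq] at hfar
      simp [SimpleGraph.dist_self] at hfar
  have hcard := Fintype.card_le_of_injective _ hinj
  simp [Fintype.card_fin] at hcard

end ATFreeOneLaminar

open ATFreeOneLaminar in
/-- Every connected AT-free graph is 1-laminar. -/
theorem atFree_is_one_laminar {V : Type*} [Fintype V] (G : SimpleGraph V)
    (hconn : G.Connected) (hAT : ATFree G) : KLaminar G 1 := by
  classical
  have hnonempty : Nonempty V := hconn.nonempty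
  have hex : ∃ n : ℕ, ∃ (a b : V) (p : G.Walk a b), IsDiametralPath G p ∧ (und G p).card = n := by
    obtain ⟨a, b, hab⟩ := SimpleGraph.exists_dist_eq_diam (G := G)
    obtain ⟨p, hp⟩ := hconn.exists_walk_length_eq_dist a b
    exact ⟨(und G p).card, a, b, p, ⟨hp, hab⟩, rfl⟩
  obtain ⟨a, b, P, hPdiam, hPcard⟩ := Nat.find_spec hex
  have hmin : ∀ (c d : V) (q : G.Walk c d), q.length = G.dist c d → G.dist c d = G.diam →
      (und G P).card ≤ (und G q).card := by
    intro c d q h1 h2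
    rw [hPcard]
    exact Nat.find_min' hex ⟨c, d, q, ⟨h1, h2⟩, rfl⟩
  by_cases hund : und G P = ∅
  · refine ⟨a, b, P, hPdiam, ?_⟩
    intro x
    by_contra hcon
    push_neg at hcon
    have hx : x ∈ und G P := mem_und.mpr (fun w hw => by have := hcon w hw; omega)
    rw [hund] at hx
    simp at hx
  · obtain ⟨z, hz⟩ := Finset.nonempty_iff_ne_empty.mpr hund
    have hzP := mem_und.mp hz
    exfalso
    have hWA0 : WalkAvoiding G a b z := ⟨P, fun x hx => far_pair (hzP x hx)⟩
    have hne : G.ediam ≠ ⊤ := ediam_ne_top hconn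
    have hD2 : 2 ≤ G.diam :=
      le_trans (hzP a P.start_mem_support) (SimpleGraph.dist_le_diam hne)
    have hab2 : 2 ≤ G.dist a b := by rw [hPdiam.2]; exact hD2
    by_cases hA : WalkAvoiding G a z b
    · by_cases hB : WalkAvoiding G b z a
      · have f1 := far_pair hab2
        have f2 := far_pair (hzP a P.start_mem_support)
        have f3 := far_pair (hzP b P.end_mem_support)
        exact hAT a b z ⟨f1.1.symm, f2.1, f3.1, f1.2,
          fun h => f2.2 h.symm, fun h => f3.2 h.symm, hWA0, hA, hB⟩
      · have hrevlen : P.reverse.length = G.dist b a := by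
          rw [Walk.length_reverse, SimpleGraph.dist_comm]
          exact hPdiam.1
        have hrevdiam : G.dist b a = G.diam := by
          rw [SimpleGraph.dist_comm]
          exact hPdiam.2
        have hundrev : und G P.reverse = und G P := by
          ext x
          simp [mem_und, Walk.support_reverse, List.mem_reverse]
        have hminrev : ∀ (c d : V) (q : G.Walk c d), q.length = G.dist c d →
            G.dist c d = G.diam → (und G P.reverse).card ≤ (und G q).card := by
          intro c d q h1 h2
          rw [hundrev]
          exact hmin c d q h1 h2
        exact engine hconn hAT P.reverse hrevlen hrevdiam hminrev
          (by rw [hundrev]; exact hz) hB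
    · exact engine hconn hAT P hPdiam.1 hPdiam.2 hmin hz hA
end

section
/- Every connected cocomparability graph is 1-laminar; that is, if the complement of a connected graph G admits a transitive orientation of its edge set, then G has a diametral path μ such that every vertex of G is at distance at most 1 from some vertex of μ. -/
open SimpleGraph

/-- The edge set of `G` admits a transitive orientation. -/
def HasTransitiveOrientation {V : Type*} (G : SimpleGraph V) : Prop :=
  ∃ r : V → V → Prop, (∀ u v, G.Adj u v ↔ (r u v ∨ r v u)) ∧
    (∀ u v, r u v → ¬ r v u) ∧ Transitive r

/-- Discrete intermediate value + umbrella: if `z` lies (in a linear order with the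
umbrella property) between the endpoints of a walk, then it is on the walk or adjacent
to a vertex of the walk. -/
private lemma straddle {V : Type*} {G : SimpleGraph V} {s : V → V → Prop}
    (htot : ∀ a b, s a b ∨ s b a) (hanti : ∀ a b, s a b → s b a → a = b)
    (humb : ∀ a b c, s a b → s b c → a ≠ b → b ≠ c → G.Adj a c → G.Adj b a ∨ G.Adj b c)
    {a b : V} (p : G.Walk a b) (z : V) (h1 : s a z) (h2 : s z b) :
    ∃ y ∈ p.support, z = y ∨ G.Adj z y := by
  revert h1 h2
  induction p with
  | nil =>
    intro h1 h2
    exact ⟨_, by simp, Or.inl (hanti _ _ h2 h1)⟩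
  | @cons u v w huv q ih =>
    intro h1 h2
    by_cases hzu : z = u
    · exact ⟨u, by simp, Or.inl hzu⟩
    · rcases htot v z with hvz | hzv
      · obtain ⟨y, hy, hzy⟩ := ih hvz h2
        exact ⟨y, by simp [hy], hzy⟩
      · by_cases hzveq : z = v
        · exact ⟨v, by
            rw [Walk.support_cons]
            exact List.mem_cons_of_mem _ q.start_mem_support, Or.inl hzveq⟩
        · rcases humb u z v h1 hzv (fun h => hzu h.symm) hzveq huv with h | h
          · exact ⟨u, by simp, Or.inr h⟩
          · exact ⟨v, by
              rw [Walk.support_cons]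
              exact List.mem_cons_of_mem _ q.start_mem_support, Or.inr h⟩

/-- If `z` lies strictly below `x` in the order and is not adjacent to `x`, and
`(x, y)` is a diametral pair with `x ≤ y`, then `(z, y)` is also a diametral pair. -/
private lemma extend_diam {V : Type*} [DecidableEq V] {G : SimpleGraph V} (hconn : G.Connected)
    {s : V → V → Prop} (htot : ∀ a b, s a b ∨ s b a)
    (hanti : ∀ a b, s a b → s b a → a = b)
    (humb : ∀ a b c, s a b → s b c → a ≠ b → b ≠ c → G.Adj a c → G.Adj b a ∨ G.Adj b c)
    (hdle : ∀ u v : V, G.dist u v ≤ G.diam)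
    {x y z : V} (hzx : s z x) (hzxne : z ≠ x) (hnadj : ¬ G.Adj z x)
    (hxy : s x y) (hd : G.dist x y = G.diam) : G.dist z y = G.diam := by
  obtain ⟨ν, hν⟩ := hconn.exists_walk_length_eq_dist z y
  obtain ⟨w, hw, hxw⟩ := straddle htot hanti humb ν x hzx hxy
  have hsplit : G.dist z w + G.dist w y ≤ G.dist z y := by
    calc G.dist z w + G.dist w y
        ≤ (ν.takeUntil w hw).length + (ν.dropUntil w hw).length :=
          Nat.add_le_add (dist_le _) (dist_le _)
      _ = ν.length := by rw [← Walk.length_append, Walk.take_spec]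
      _ = G.dist z y := hν
  have h1 : G.dist x y ≤ G.dist z y := by
    rcases hxw with rfl | hadjxw
    · omega
    · have hwz : w ≠ z := fun h => hnadj (h ▸ hadjxw).symm
      have h2 : 0 < G.dist z w := hconn.pos_dist_of_ne (fun h => hwz h.symm)
      have h3 : G.dist x y ≤ G.dist x w + G.dist w y := hconn.dist_triangle
      have h4 : G.dist x w = 1 := dist_eq_one_iff_adj.mpr hadjxw
      omega
  have h5 := hdle z y
  omega

/-- Every connected cocomparability graph (the complement of `G` admits a transitive
orientation of its edges) is 1-laminar. -/
theorem cocomparability_is_one_laminar {V : Type*} [Fintype V] (G : SimpleGraph V)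
    (hconn : G.Connected) (hco : HasTransitiveOrientation Gᶜ) : KLaminar G 1 := by
  classical
  obtain ⟨r, hadj, hasym, htrans⟩ := hco
  haveI : Nonempty V := hconn.nonempty
  -- diameter is attained and bounds all distances
  have hetop : G.ediam ≠ ⊤ := by
    obtain ⟨u, v, huv⟩ := G.exists_edist_eq_ediam_of_finite
    rw [← huv]
    exact edist_ne_top_iff_reachable.mpr (hconn u v)
  have hdle : ∀ u v : V, G.dist u v ≤ G.diam := fun u v => dist_le_diam hetop
  -- linear extension of the transitive orientation
  let r' : V → V → Prop := fun a b => r a b ∨ a = b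
  haveI hpo : IsPartialOrder V r' :=
    { refl := fun a => Or.inr rfl
      trans := by
        rintro a b c (hab | rfl) (hbc | rfl)
        · exact Or.inl (htrans hab hbc)
        · exact Or.inl hab
        · exact Or.inl hbc
        · exact Or.inr rfl
      antisymm := by
        intro a b h1 h2
        rcases h1 with hab | rfl
        · rcases h2 with hba | h
          · exact absurd hba (hasym a b hab)
          · exact h.symm
        · rfl }
  obtain ⟨s, hlin, hrs⟩ := extend_partialOrder r'
  have htot : ∀ a b, s a b ∨ s b a := fun a b => hlin.total a b
  have hanti : ∀ a b, s a b → s b a → a = b := fun a b h h' => hlin.antisymm a b h h'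
  have hstrans : ∀ {a b c}, s a b → s b c → s a c := fun h h' => hlin.trans _ _ _ h h'
  have hrefl : ∀ a, s a a := fun a => (htot a a).elim id id
  -- relating r to G
  have hrnadj : ∀ a b, r a b → a ≠ b ∧ ¬ G.Adj a b := by
    intro a b h
    exact (G.compl_adj a b).mp ((hadj a b).mpr (Or.inl h))
  -- umbrella property
  have humb : ∀ a b c, s a b → s b c → a ≠ b → b ≠ c → G.Adj a c → G.Adj b a ∨ G.Adj b c := by
    intro a b c hab hbc nab nbc hac
    by_contra hcon
    push_neg at hcon
    have hrab : r a b := by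
      have hcadj : Gᶜ.Adj a b := (G.compl_adj a b).mpr ⟨nab, fun h => hcon.1 h.symm⟩
      rcases (hadj a b).mp hcadj with h | h
      · exact h
      · exact absurd (hanti a b hab (hrs b a (Or.inl h))) nab
    have hrbc : r b c := by
      have hcadj : Gᶜ.Adj b c := (G.compl_adj b c).mpr ⟨nbc, hcon.2⟩
      rcases (hadj b c).mp hcadj with h | h
      · exact h
      · exact absurd (hanti b c hbc (hrs c b (Or.inl h))) nbc
    exact (hrnadj a c (htrans hrab hrbc)).2 hac
  -- the flipped order also has all these properties
  have htot' : ∀ a b, s b a ∨ s a b := fun a b => htot b a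
  have hanti' : ∀ a b, s b a → s a b → a = b := fun a b h h' => (hanti b a h h').symm
  have humb' : ∀ a b c, s b a → s c b → a ≠ b → b ≠ c → G.Adj a c → G.Adj b a ∨ G.Adj b c :=
    fun a b c h1 h2 n1 n2 hac => (humb c b a h2 h1 n2.symm n1.symm hac.symm).symm
  -- position function
  set n := Fintype.card V with hn
  have hnpos : 0 < n := Fintype.card_pos
  let pos : V → ℕ := fun v => (Finset.univ.filter fun w => s w v ∧ w ≠ v).card
  have hposlt : ∀ a b, s a b → a ≠ b → pos a < pos b := by
    intro a b hab hne
    apply Finset.card_lt_card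
    rw [Finset.ssubset_iff_of_subset]
    · refine ⟨a, by simp [hab, hne], by simp⟩
    · intro w hw
      simp only [Finset.mem_filter, Finset.mem_univ, true_and] at hw ⊢
      exact ⟨hstrans hw.1 hab, fun h => hne (hanti a b hab (h ▸ hw.1))⟩
  have hposle : ∀ v : V, pos v ≤ n - 1 := by
    intro v
    have h1 : (Finset.univ.filter fun w => s w v ∧ w ≠ v) ⊆ Finset.univ.erase v := by
      intro w hw
      simp only [Finset.mem_filter, Finset.mem_univ, true_and] at hw
      exact Finset.mem_erase.mpr ⟨hw.2, Finset.mem_univ w⟩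
    have h2 := Finset.card_le_card h1
    rwa [Finset.card_erase_of_mem (Finset.mem_univ v), Finset.card_univ] at h2
  -- choose an extremal diametral pair
  let P : Finset (V × V) := Finset.univ.filter fun q => G.dist q.1 q.2 = G.diam ∧ s q.1 q.2
  have hPne : P.Nonempty := by
    obtain ⟨u, v, huv⟩ := G.exists_dist_eq_diam
    rcases htot u v with h | h
    · exact ⟨(u, v), by simp [P, huv, h]⟩
    · have h2 : G.dist v u = G.diam := by
        rw [SimpleGraph.dist_comm]; exact huv
      exact ⟨(v, u), by simp [P, h, h2]⟩
  obtain ⟨⟨x, y⟩, hxyP, hmin⟩ :=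
    P.exists_min_image (fun q => pos q.1 * n + (n - 1 - pos q.2)) hPne
  simp only [P, Finset.mem_filter, Finset.mem_univ, true_and] at hxyP
  obtain ⟨hdxy, hsxy⟩ := hxyP
  obtain ⟨p, hp⟩ := hconn.exists_walk_length_eq_dist x y
  refine ⟨x, y, p, ⟨hp, hdxy⟩, ?_⟩
  intro z
  rcases htot x z with hxz | hzx
  · by_cases hzy : s z y
    · -- z between x and y: straddle
      obtain ⟨w, hw, hzw⟩ := straddle htot hanti humb p z hxz hzy
      refine ⟨w, hw, ?_⟩
      rcases hzw with rfl | hadjzw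
      · simp [SimpleGraph.dist_self]
      · exact le_of_eq (dist_eq_one_iff_adj.mpr hadjzw)
    · -- z above y
      have hyz : s y z := (htot z y).resolve_left hzy
      have hzyne : z ≠ y := fun h => hzy (h ▸ hrefl z)
      by_cases hadjzy : G.Adj z y
      · exact ⟨y, p.end_mem_support, le_of_eq (dist_eq_one_iff_adj.mpr hadjzy)⟩
      · exfalso
        have hd2 : G.dist z x = G.diam := by
          refine extend_diam hconn htot' hanti' humb' hdle hyz hzyne hadjzy hsxy ?_
          rw [SimpleGraph.dist_comm]
          exact hdxy
        have hd3 : G.dist x z = G.diam := by rwa [SimpleGraph.dist_comm] at hd2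
        have hmem : (x, z) ∈ P := by simp [P, hd3, hxz]
        have hlt : pos y < pos z := hposlt y z hyz (fun h => hzyne h.symm)
        have hle := hposle z
        have hm := hmin (x, z) hmem
        dsimp only at hm
        generalize hA : pos x * n = A at hm
        omega
  · -- z below x
    by_cases hzxeq : z = x
    · exact ⟨x, p.start_mem_support, by subst hzxeq; simp [SimpleGraph.dist_self]⟩
    by_cases hadjzx : G.Adj z x
    · exact ⟨x, p.start_mem_support, le_of_eq (dist_eq_one_iff_adj.mpr hadjzx)⟩
    · exfalso
      have hd2 : G.dist z y = G.diam :=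
        extend_diam hconn htot hanti humb hdle hzx hzxeq hadjzx hsxy hdxy
      have hmem : (z, y) ∈ P := by simp [P, hd2, hstrans hzx hsxy]
      have hlt : pos z < pos x := hposlt z x hzx hzxeq
      have h1 : pos z * n < pos x * n := Nat.mul_lt_mul_of_lt_of_le hlt (le_refl n) hnpos
      have hm := hmin (z, y) hmem
      dsimp only at hm
      generalize hA : pos z * n = A at hm h1
      generalize hB : pos x * n = B at hm h1
      omega
end

section
/- Let G₁ be the graph on vertex set {a,b,c,d,e,f,g,h} with edge set {ab, bc, cd, ce, ef, fd, cg, gh, hd}. Then G₁ is 1-laminar (the shortest path a,b,c,d,h is diametral and 1-dominating), but G₁ is not AT-free: (a,f,h) is an asteroidal triple. Hence the class of 1-laminar graphs is not contained in the class of AT-free graphs. -/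
open SimpleGraph

/-- The graph `G₁` on vertices `a, b, c, d, e, f, g, h` (encoded as `0, …, 7`) with edges
`ab, bc, cd, ce, ef, fd, cg, gh, hd`. -/
def G1 : SimpleGraph (Fin 8) :=
  SimpleGraph.fromRel (fun u v =>
    (u, v) ∈ [((0:Fin 8),(1:Fin 8)),(1,2),(2,3),(2,4),(4,5),(5,3),(2,6),(6,7),(7,3)])

instance : DecidableRel G1.Adj := fun u v =>
  decidable_of_iff _ (SimpleGraph.fromRel_adj _ u v).symm

/-- The path `a, b, c, d, h`. -/
def P1 : G1.Walk 0 7 :=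
  .cons (show G1.Adj 0 1 by decide) (.cons (show G1.Adj 1 2 by decide)
    (.cons (show G1.Adj 2 3 by decide) (.cons (show G1.Adj 3 7 by decide) .nil)))

section Aux

/-- Distance-from-`0` labels. -/
def dA : Fin 8 → ℕ := ![0,1,2,3,3,4,3,4]

lemma dA_step : ∀ u v : Fin 8, G1.Adj u v → dA v ≤ dA u + 1 := by decide

lemma dA_walk : ∀ {u v : Fin 8} (p : G1.Walk u v), dA v ≤ dA u + p.length := by
  intro u v p
  induction p with
  | nil => simp
  | cons h p ih =>
    have hs := dA_step _ _ h
    rw [SimpleGraph.Walk.length_cons]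
    omega

/-- a convenient single-edge walk -/
def W1 {u v : Fin 8} (h : G1.Adj u v) : G1.Walk u v := .cons h .nil

lemma dist_le_one_of_adj {u v : Fin 8} (h : G1.Adj u v) : G1.dist u v ≤ 1 := by
  simpa [W1] using SimpleGraph.dist_le (W1 h)

lemma edist_le_two {u v : Fin 8} (p : G1.Walk u v) (h : p.length ≤ 2) : G1.edist u v ≤ 2 := by
  calc G1.edist u v ≤ p.length := SimpleGraph.edist_le p
  _ ≤ 2 := by exact_mod_cast h

lemma edist2 : ∀ u : Fin 8, G1.edist u 2 ≤ 2 := by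
  intro u
  fin_cases u
  · exact edist_le_two (show G1.Walk 0 2 from .cons (show G1.Adj 0 1 by decide)
      (.cons (show G1.Adj 1 2 by decide) .nil)) (by decide)
  · exact edist_le_two (show G1.Walk 1 2 from .cons (show G1.Adj 1 2 by decide) .nil) (by decide)
  · simp
  · exact edist_le_two (show G1.Walk 3 2 from .cons (show G1.Adj 3 2 by decide) .nil) (by decide)
  · exact edist_le_two (show G1.Walk 4 2 from .cons (show G1.Adj 4 2 by decide) .nil) (by decide)
  · exact edist_le_two (show G1.Walk 5 2 from .cons (show G1.Adj 5 4 by decide)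
      (.cons (show G1.Adj 4 2 by decide) .nil)) (by decide)
  · exact edist_le_two (show G1.Walk 6 2 from .cons (show G1.Adj 6 2 by decide) .nil) (by decide)
  · exact edist_le_two (show G1.Walk 7 2 from .cons (show G1.Adj 7 3 by decide)
      (.cons (show G1.Adj 3 2 by decide) .nil)) (by decide)

lemma dist07 : G1.dist 0 7 = 4 := by
  refine le_antisymm (by simpa [P1] using SimpleGraph.dist_le P1) ?_
  obtain ⟨p, hp⟩ := (SimpleGraph.Walk.reachable P1).exists_walk_length_eq_dist
  have := dA_walk p
  have h7 : dA 7 = 4 := rfl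
  have h0 : dA 0 = 0 := rfl
  omega

lemma edist07 : G1.edist 0 7 = 4 := by
  have hne : G1.edist 0 7 ≠ ⊤ :=
    SimpleGraph.edist_ne_top_iff_reachable.mpr (SimpleGraph.Walk.reachable P1)
  have hc : ((G1.edist 0 7).toNat : ℕ∞) = G1.edist 0 7 := ENat.coe_toNat hne
  rw [← hc]
  have h4 : (G1.edist 0 7).toNat = 4 := dist07
  rw [h4]; rfl

lemma ediam4 : G1.ediam = 4 := by
  refine le_antisymm (SimpleGraph.ediam_le_of_edist_le fun u v => ?_)
    (edist07 ▸ SimpleGraph.edist_le_ediam)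
  calc G1.edist u v ≤ G1.edist u 2 + G1.edist 2 v := SimpleGraph.edist_triangle
    _ ≤ 2 + 2 := by
        gcongr
        · exact edist2 u
        · rw [SimpleGraph.edist_comm]; exact edist2 v
    _ = 4 := by norm_num

lemma diam4 : G1.diam = 4 := by
  rw [SimpleGraph.diam, ediam4]; rfl

end Aux

/-- The path `a, b, c, d, h` is a 1-dominating diametral path of `G₁`, so `G₁` is 1-laminar;
but `(a, f, h)` is an asteroidal triple, so `G₁` is not AT-free.  Hence the class of
1-laminar graphs is not contained in the class of AT-free graphs. -/
theorem one_laminar_not_subset_ATFree :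
    IsDiametralPath G1 P1 ∧ IsKDominating G1 1 P1 ∧ KLaminar G1 1 ∧
    IsAsteroidalTriple G1 0 5 7 ∧ ¬ ATFree G1 := by

  have hdiam : IsDiametralPath G1 P1 := ⟨by rw [dist07]; rfl, by rw [dist07, diam4]⟩
  have hdom : IsKDominating G1 1 P1 := by
    intro x
    fin_cases x
    · exact ⟨0, by simp [P1], le_trans (le_of_eq SimpleGraph.dist_self) (Nat.zero_le 1)⟩
    · exact ⟨1, by simp [P1], le_trans (le_of_eq SimpleGraph.dist_self) (Nat.zero_le 1)⟩
    · exact ⟨2, by simp [P1], le_trans (le_of_eq SimpleGraph.dist_self) (Nat.zero_le 1)⟩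
    · exact ⟨3, by simp [P1], le_trans (le_of_eq SimpleGraph.dist_self) (Nat.zero_le 1)⟩
    · exact ⟨2, by simp [P1], dist_le_one_of_adj (by decide)⟩
    · exact ⟨3, by simp [P1], dist_le_one_of_adj (by decide)⟩
    · exact ⟨2, by simp [P1], dist_le_one_of_adj (by decide)⟩
    · exact ⟨7, by simp [P1], le_trans (le_of_eq SimpleGraph.dist_self) (Nat.zero_le 1)⟩
  have hAT : IsAsteroidalTriple G1 0 5 7 := by
    refine ⟨by decide, by decide, by decide, by decide, by decide, by decide, ?_, ?_, ?_⟩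
    · exact ⟨.cons (show G1.Adj 0 1 by decide) (.cons (show G1.Adj 1 2 by decide)
        (.cons (show G1.Adj 2 4 by decide) (W1 (by decide)))), by decide⟩
    · exact ⟨.cons (show G1.Adj 0 1 by decide) (.cons (show G1.Adj 1 2 by decide)
        (.cons (show G1.Adj 2 6 by decide) (W1 (by decide)))), by decide⟩
    · exact ⟨.cons (show G1.Adj 5 3 by decide) (W1 (by decide)), by decide⟩
  exact ⟨hdiam, hdom, ⟨0, 7, P1, hdiam, hdom⟩, hAT, fun h => h 0 5 7 hAT⟩
end

section
/- Let G₂ be the graph on vertex set {a,b,c,d,e,f,g} with edge set {ab, bc, cd, de, cf, fe, fg, fd}. Then G₂ is AT-free, but G₂ is not strongly 1-laminar: the path a,b,c,d,e is a diametral path of G₂ that is not 1-dominating (the vertex g is at distance 2 from it). Hence AT-free graphs are not always strongly 1-laminar. -/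
open SimpleGraph

/-- `G` is strongly `k`-laminar: every diametral path of `G` is `k`-dominating. -/
def StronglyKLaminar {V : Type*} (G : SimpleGraph V) (k : ℕ) : Prop :=
  ∀ (u v : V) (p : G.Walk u v), IsDiametralPath G p → IsKDominating G k p

/-- The graph `G₂` on vertices `a, b, c, d, e, f, g` (encoded as `0, …, 6`) with edges
`ab, bc, cd, de, cf, fe, fg, fd`. -/
def G2 : SimpleGraph (Fin 7) :=
  SimpleGraph.fromRel (fun u v =>
    (u, v) ∈ [((0:Fin 7),(1:Fin 7)),(1,2),(2,3),(3,4),(2,5),(5,4),(5,6),(5,3)])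

instance : DecidableRel G2.Adj := fun u v =>
  decidable_of_iff _ (SimpleGraph.fromRel_adj _ u v).symm

/-- The path `a, b, c, d, e`. -/
def P2 : G2.Walk 0 4 :=
  .cons (show G2.Adj 0 1 by decide) (.cons (show G2.Adj 1 2 by decide)
    (.cons (show G2.Adj 2 3 by decide) (.cons (show G2.Adj 3 4 by decide) .nil)))


section Aux

lemma not_walkAvoiding (x y z : Fin 7) (hxy : x ≠ y)
    (hiso : ∀ w, G2.Adj x w → w = z ∨ G2.Adj z w) : ¬ WalkAvoiding G2 x y z := by
  rintro ⟨p, hp⟩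
  cases p with
  | nil => exact hxy rfl
  | @cons _ w _ h q =>
    have hw := hp w (by simp [SimpleGraph.Walk.support_cons, q.start_mem_support])
    rcases hiso w h with h1 | h2
    · exact hw.1 h1
    · exact hw.2 h2

lemma not_walkAvoiding' (x y z : Fin 7) (hxy : x ≠ y)
    (hiso : ∀ w, G2.Adj x w → w = z ∨ G2.Adj z w) : ¬ WalkAvoiding G2 y x z := by
  rintro ⟨p, hp⟩
  exact not_walkAvoiding x y z hxy hiso
    ⟨p.reverse, fun v hv => hp v (by simpa [SimpleGraph.Walk.support_reverse] using hv)⟩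

lemma lip_walk (φ : Fin 7 → ℕ) (h : ∀ x y, G2.Adj x y → φ y ≤ φ x + 1) :
    ∀ {u v : Fin 7} (p : G2.Walk u v), φ v ≤ φ u + p.length := by
  intro u v p
  induction p with
  | nil => simp
  | cons hadj q ih =>
    have := h _ _ hadj
    simp only [SimpleGraph.Walk.length_cons]
    omega

lemma walk_to_two : ∀ x : Fin 7, ∃ p : G2.Walk x 2, p.length ≤ 2 := by
  intro x
  fin_cases x
  · exact ⟨.cons (show G2.Adj 0 1 by decide) (.cons (show G2.Adj 1 2 by decide) .nil), by simp⟩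
  · exact ⟨.cons (show G2.Adj 1 2 by decide) .nil, by simp⟩
  · exact ⟨.nil, by simp⟩
  · exact ⟨.cons (show G2.Adj 3 2 by decide) .nil, by simp⟩
  · exact ⟨.cons (show G2.Adj 4 3 by decide) (.cons (show G2.Adj 3 2 by decide) .nil), by simp⟩
  · exact ⟨.cons (show G2.Adj 5 2 by decide) .nil, by simp⟩
  · exact ⟨.cons (show G2.Adj 6 5 by decide) (.cons (show G2.Adj 5 2 by decide) .nil), by simp⟩

lemma G2_pre : G2.Preconnected := by
  intro u v
  obtain ⟨p, -⟩ := walk_to_two u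
  obtain ⟨q, -⟩ := walk_to_two v
  exact SimpleGraph.Reachable.trans ⟨p⟩ (SimpleGraph.Reachable.symm ⟨q⟩)

lemma two_le_dist_aux (x y : Fin 7) (h1 : x ≠ y) (h2 : ¬ G2.Adj x y) :
    2 ≤ G2.dist x y := by
  have hr : G2.Reachable x y := G2_pre x y
  have h0 : 0 < G2.dist x y := hr.pos_dist_of_ne h1
  have hne1 : G2.dist x y ≠ 1 := fun h => h2 (SimpleGraph.dist_eq_one_iff_adj.mp h)
  omega

lemma G2_dist_04 : G2.dist 0 4 = 4 := by
  have hle : G2.dist 0 4 ≤ 4 := by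
    have := SimpleGraph.dist_le P2
    simpa [P2] using this
  have hge : 4 ≤ G2.dist 0 4 := by
    obtain ⟨p, hp⟩ := (G2_pre 0 4).exists_walk_length_eq_dist
    have h := lip_walk ![0,1,2,3,4,3,4] (by decide) p
    have e0 : (![0,1,2,3,4,3,4] : Fin 7 → ℕ) 0 = 0 := rfl
    have e4 : (![0,1,2,3,4,3,4] : Fin 7 → ℕ) 4 = 4 := rfl
    rw [e0, e4, hp] at h
    omega
  omega

lemma G2_ediam_le : G2.ediam ≤ 4 := by
  apply SimpleGraph.ediam_le_of_edist_le
  intro u v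
  have hu : G2.edist u 2 ≤ 2 := by
    obtain ⟨p, hp⟩ := walk_to_two u
    exact (SimpleGraph.edist_le p).trans (by exact_mod_cast hp)
  have hv : G2.edist 2 v ≤ 2 := by
    rw [SimpleGraph.edist_comm]
    obtain ⟨p, hp⟩ := walk_to_two v
    exact (SimpleGraph.edist_le p).trans (by exact_mod_cast hp)
  calc G2.edist u v ≤ G2.edist u 2 + G2.edist 2 v := SimpleGraph.edist_triangle
    _ ≤ 2 + 2 := add_le_add hu hv
    _ = 4 := by norm_num

lemma G2_ediam_ne_top : G2.ediam ≠ ⊤ := by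
  intro h
  have hle := G2_ediam_le
  rw [h] at hle
  simp at hle

lemma G2_diam : G2.diam = 4 := by
  have h1 : G2.diam ≤ 4 := by
    have := ENat.toNat_le_toNat G2_ediam_le (by simp)
    simpa [SimpleGraph.diam] using this
  have h2 : 4 ≤ G2.diam := G2_dist_04 ▸ SimpleGraph.dist_le_diam G2_ediam_ne_top
  omega

lemma G2_ATFree : ATFree G2 := by
  intro a b c h
  obtain ⟨hab, hac, hbc, nab, nac, nbc, w1, w2, w3⟩ := h
  fin_cases a <;> fin_cases b <;> fin_cases c <;>
    first
      | exact hab (by decide)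
      | exact hac (by decide)
      | exact hbc (by decide)
      | exact nab (by decide)
      | exact nac (by decide)
      | exact nbc (by decide)
      | exact not_walkAvoiding _ _ _ (by decide) (by decide) w1
      | exact not_walkAvoiding _ _ _ (by decide) (by decide) w2
      | exact not_walkAvoiding _ _ _ (by decide) (by decide) w3
      | exact not_walkAvoiding' _ _ _ (by decide) (by decide) w1
      | exact not_walkAvoiding' _ _ _ (by decide) (by decide) w2
      | exact not_walkAvoiding' _ _ _ (by decide) (by decide) w3

lemma P2_support_dist : ∀ y ∈ P2.support, 2 ≤ G2.dist 6 y := by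
  intro y hy
  have : y = 0 ∨ y = 1 ∨ y = 2 ∨ y = 3 ∨ y = 4 := by
    simpa [P2, SimpleGraph.Walk.support_cons] using hy
  rcases this with rfl | rfl | rfl | rfl | rfl <;>
    exact two_le_dist_aux _ _ (by decide) (by decide)

end Aux

/-- `G₂` is AT-free, but the diametral path `a, b, c, d, e` is not 1-dominating (the vertex
`g` is at distance 2 from it), so `G₂` is not strongly 1-laminar: AT-free graphs are not
always strongly 1-laminar. -/
theorem ATFree_not_always_strongly_one_laminar :
    ATFree G2 ∧ IsDiametralPath G2 P2 ∧ ¬ IsKDominating G2 1 P2 ∧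
    (∀ y ∈ P2.support, 2 ≤ G2.dist 6 y) ∧ (∃ y ∈ P2.support, G2.dist 6 y = 2) ∧
    ¬ StronglyKLaminar G2 1 := by
  have hdist62 : G2.dist 6 2 = 2 := by
    have hle : G2.dist 6 2 ≤ 2 := by
      have := SimpleGraph.dist_le (.cons (show G2.Adj 6 5 by decide)
        (.cons (show G2.Adj 5 2 by decide) (.nil : G2.Walk 2 2)))
      simpa using this
    have hge := two_le_dist_aux 6 2 (by decide) (by decide)
    omega
  have hdia : IsDiametralPath G2 P2 := by
    constructor
    · rw [G2_dist_04]; rfl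
    · rw [G2_dist_04, G2_diam]
  have hndom : ¬ IsKDominating G2 1 P2 := by
    intro h
    obtain ⟨y, hy, hle⟩ := h 6
    have := P2_support_dist y hy
    omega
  refine ⟨G2_ATFree, hdia, hndom, P2_support_dist, ⟨2, ?_, hdist62⟩, ?_⟩
  · simp [P2, SimpleGraph.Walk.support_cons]
  · intro h
    exact hndom (h 0 4 P2 hdia)
end

section
/- Let G₃ be the graph on vertex set {a,b,c,d,e,f,g,h,i,j} with edge set {ab, bc, cd, de, fg, gh, hi, ij, af, ej, ag, gc, bg, bh, ie, dj}. Then G₃ is strongly 1-laminar (every diametral path of G₃ is 1-dominating), but G₃ is not AT-free: (g,i,d) is an asteroidal triple. Hence the class of strongly 1-laminar graphs is not contained in the class of AT-free graphs. -/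
open SimpleGraph

/-- The graph `G₃` on vertices `a, …, j` (encoded as `0, …, 9`) with edges
`ab, bc, cd, de, fg, gh, hi, ij, af, ej, ag, gc, bg, bh, ie, dj`. -/
def G3 : SimpleGraph (Fin 10) :=
  SimpleGraph.fromRel (fun u v =>
    (u, v) ∈ [((0:Fin 10),(1:Fin 10)),(1,2),(2,3),(3,4),(5,6),(6,7),(7,8),(8,9),
      (0,5),(4,9),(0,6),(6,2),(1,6),(1,7),(8,4),(3,9)])

instance G3.adjDecidable : DecidableRel G3.Adj := fun u v =>
  decidable_of_iff _ (SimpleGraph.fromRel_adj _ u v).symm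

/-- Distance table for `G3`. -/
def dT : Fin 10 → Fin 10 → ℕ := fun u v =>
  ![![0,1,2,3,4,1,1,2,3,4],
    ![1,0,1,2,3,2,1,1,2,3],
    ![2,1,0,1,2,2,1,2,3,2],
    ![3,2,1,0,1,3,2,3,2,1],
    ![4,3,2,1,0,4,3,2,1,1],
    ![1,2,2,3,4,0,1,2,3,4],
    ![1,1,1,2,3,1,0,1,2,3],
    ![2,1,2,3,2,2,1,0,1,2],
    ![3,2,3,2,1,3,2,1,0,1],
    ![4,3,2,1,1,4,3,2,1,0]] u v

lemma G3_walks : ∀ u v : Fin 10, (G3.finsetWalkLength (dT u v) u v).Nonempty ∧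
    ∀ m < dT u v, G3.finsetWalkLength m u v = ∅ := by decide

lemma G3_dist (u v : Fin 10) : G3.dist u v = dT u v := by
  obtain ⟨⟨p, hp⟩, hmin⟩ := G3_walks u v
  rw [SimpleGraph.mem_finsetWalkLength_iff] at hp
  have h1 : G3.dist u v ≤ dT u v := hp ▸ SimpleGraph.dist_le p
  have hr : G3.Reachable u v := ⟨p⟩
  obtain ⟨q, hq⟩ := hr.exists_walk_length_eq_dist
  rcases lt_or_eq_of_le h1 with h | h
  · have hmem : q ∈ G3.finsetWalkLength (G3.dist u v) u v :=
      SimpleGraph.mem_finsetWalkLength_iff.mpr hq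
    rw [hmin _ h] at hmem
    exact absurd hmem (Finset.notMem_empty q)
  · exact h

lemma dT_le : ∀ u v : Fin 10, dT u v ≤ 4 := by decide

lemma G3_ediam : G3.ediam = 4 := by
  have h04 : G3.edist 0 4 = 4 := by
    obtain ⟨⟨p, hp⟩, -⟩ := G3_walks 0 4
    have hne : G3.edist 0 4 ≠ ⊤ :=
      SimpleGraph.edist_ne_top_iff_reachable.mpr ⟨p⟩
    have hd : G3.dist 0 4 = 4 := G3_dist 0 4
    have : ((G3.edist 0 4).toNat : ℕ∞) = G3.edist 0 4 := ENat.coe_toNat hne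
    rw [← this]
    rw [show (G3.edist 0 4).toNat = 4 from hd]
    rfl
  apply le_antisymm
  · apply SimpleGraph.ediam_le_of_edist_le
    intro u v
    obtain ⟨⟨p, hp⟩, -⟩ := G3_walks u v
    rw [SimpleGraph.mem_finsetWalkLength_iff] at hp
    calc G3.edist u v ≤ p.length := SimpleGraph.edist_le p
      _ = (dT u v : ℕ∞) := by exact_mod_cast congrArg Nat.cast hp
      _ ≤ (4 : ℕ∞) := by exact_mod_cast dT_le u v
  · rw [← h04]
    exact SimpleGraph.edist_le_ediam

lemma G3_diam : G3.diam = 4 := by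
  rw [SimpleGraph.diam, G3_ediam]
  rfl

lemma G3_dom : ∀ u v : Fin 10, dT u v = 4 →
    ∀ p ∈ G3.finsetWalkLength 4 u v, ∀ x : Fin 10,
      ∃ y ∈ p.support, x = y ∨ G3.Adj x y := by decide


/-- `G₃` is strongly 1-laminar (every diametral path is 1-dominating), but `(g, i, d)` is an
asteroidal triple, so `G₃` is not AT-free: the class of strongly 1-laminar graphs is not
contained in the class of AT-free graphs. -/
theorem strongly_one_laminar_not_subset_ATFree :
    StronglyKLaminar G3 1 ∧ IsAsteroidalTriple G3 6 8 3 ∧ ¬ ATFree G3 := by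
  have hAT : IsAsteroidalTriple G3 6 8 3 := by
    refine ⟨by decide, by decide, by decide, by decide, by decide, by decide, ?_, ?_, ?_⟩
    · exact ⟨Walk.cons (by decide : G3.Adj 6 7) (Walk.cons (by decide : G3.Adj 7 8) Walk.nil),
        by decide⟩
    · exact ⟨Walk.cons (by decide : G3.Adj 6 2) (Walk.cons (by decide : G3.Adj 2 3) Walk.nil),
        by decide⟩
    · exact ⟨Walk.cons (by decide : G3.Adj 8 9) (Walk.cons (by decide : G3.Adj 9 3) Walk.nil),
        by decide⟩
  refine ⟨?_, hAT, fun h => h 6 8 3 hAT⟩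
  rintro u v p ⟨h1, h2⟩
  rw [G3_diam] at h2
  have hdt : dT u v = 4 := by rw [← G3_dist]; exact h2
  have hp4 : p.length = 4 := h1.trans h2
  have hpmem : p ∈ G3.finsetWalkLength 4 u v :=
    SimpleGraph.mem_finsetWalkLength_iff.mpr hp4
  intro x
  obtain ⟨y, hy, hxy⟩ := G3_dom u v hdt p hpmem x
  refine ⟨y, hy, ?_⟩
  rcases hxy with rfl | hadj
  · simp [SimpleGraph.dist_self]
  · rw [SimpleGraph.dist_eq_one_iff_adj.mpr hadj]
end

section
/- For every 3SAT formula φ on n boolean variables (n even, n ≥ 4), the graph G(φ) is connected and diam(G(φ)) = 3n − 1 = d(V₁, V_{2n}). -/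
open SimpleGraph

/-- Vertices of the graph `G(φ)` associated with a 3SAT formula `φ` with `m` clauses over `n`
boolean variables (`n` even):
* `lit i b` is the literal vertex `X_{i+1}` (if `b = true`) or `X̄_{i+1}` (if `b = false`);
* `chain k` is the vertex `V_{k+1}` of the two pending chains `V₁ — ⋯ — V_n` and
  `V_{n+1} — ⋯ — V_{2n}`;
* `clause j` is the vertex of the clause `C_{j+1}`;
* `inner j t s` is the `(s+1)`-st internal vertex of the path of length `n/2 + 1` (with `n/2`
  internal vertices) joining the clause vertex `C_{j+1}` to the vertex of its `(t+1)`-st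
  literal. -/
inductive Vert (n m : ℕ) : Type
  | lit : Fin n → Bool → Vert n m
  | chain : Fin (2 * n) → Vert n m
  | clause : Fin m → Vert n m
  | inner : Fin m → Fin 3 → Fin (n / 2) → Vert n m
  deriving DecidableEq

/-- The base (asymmetric) adjacency relation of `G(φ)`, where the 3SAT formula `φ` assigns to
each clause index `j` and each slot `t ∈ {0,1,2}` a literal `φ j t = (i, b)` (variable index
`i`, polarity `b`):
* `X_i` and `X̄_i` are adjacent, and every vertex of `{X_i, X̄_i}` is adjacent to every vertex
  of `{X_{i+1}, X̄_{i+1}}`;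
* `V₁ — ⋯ — V_n` and `V_{n+1} — ⋯ — V_{2n}` are paths, `V_n` is moreover adjacent to both
  `X₁, X̄₁` and `V_{n+1}` to both `X_n, X̄_n`;
* each clause vertex `C_j` is joined to the vertex of each of its literals by a path of length
  `n/2 + 1` whose `n/2` internal vertices are the `inner j t s`. -/
def satRel (n m : ℕ) (φ : Fin m → Fin 3 → Fin n × Bool) : Vert n m → Vert n m → Prop
  | .lit i b, .lit i' b' => (i = i' ∧ b ≠ b') ∨ (i : ℕ) + 1 = (i' : ℕ)
  | .chain k, .chain k' => (k : ℕ) + 1 = (k' : ℕ) ∧ (k' : ℕ) ≠ n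
  | .chain k, .lit i _ => ((k : ℕ) = n - 1 ∧ (i : ℕ) = 0) ∨ ((k : ℕ) = n ∧ (i : ℕ) = n - 1)
  | .clause j, .inner j' _ s => j = j' ∧ (s : ℕ) = 0
  | .inner j t s, .inner j' t' s' => j = j' ∧ t = t' ∧ (s : ℕ) + 1 = (s' : ℕ)
  | .inner j t s, .lit i b => (s : ℕ) = n / 2 - 1 ∧ φ j t = (i, b)
  | _, _ => False

/-- The graph `G(φ)` associated with a 3SAT formula `φ`. -/
def Gphi (n m : ℕ) (φ : Fin m → Fin 3 → Fin n × Bool) : SimpleGraph (Vert n m) :=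
  SimpleGraph.fromRel (satRel n m φ)

namespace GphiAux

variable {n m : ℕ} {φ : Fin m → Fin 3 → Fin n × Bool}

lemma adj_of_rel {u v : Vert n m} (hne : u ≠ v) (h : satRel n m φ u v) :
    (Gphi n m φ).Adj u v :=
  (SimpleGraph.fromRel_adj _ _ _).mpr ⟨hne, Or.inl h⟩

lemma chain_ne {k k' : Fin (2*n)} (h : (k:ℕ) ≠ (k':ℕ)) :
    (Vert.chain k : Vert n m) ≠ Vert.chain k' := fun he => by cases he; exact h rfl

lemma lit_ne {i i' : Fin n} {b b' : Bool} (h : (i:ℕ) ≠ (i':ℕ) ∨ b ≠ b') :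
    (Vert.lit i b : Vert n m) ≠ Vert.lit i' b' := by
  intro he; cases he; rcases h with h | h <;> exact h rfl

lemma inner_ne {j j' : Fin m} {t t' : Fin 3} {s s' : Fin (n/2)} (h : (s:ℕ) ≠ (s':ℕ)) :
    (Vert.inner j t s : Vert n m) ≠ Vert.inner j' t' s' := by
  intro he; cases he; exact h rfl

lemma walk_chain_low (h2 : 2 ≤ n) : ∀ d (k : Fin (2*n)), (k:ℕ) + d = n - 1 →
    ∃ w : (Gphi n m φ).Walk (Vert.chain k) (Vert.chain ⟨n-1, by omega⟩), w.length = d := by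
  intro d
  induction d with
  | zero =>
    intro k hk
    obtain ⟨kv, hv⟩ := k
    have hk2 : kv + 0 = n - 1 := hk
    obtain rfl : kv = n - 1 := by omega
    exact ⟨.nil, rfl⟩
  | succ d ih =>
    intro k hk
    have hk1 : (k:ℕ)+1 < 2*n := by omega
    obtain ⟨w, hw⟩ := ih ⟨(k:ℕ)+1, hk1⟩ (by simp; omega)
    refine ⟨.cons (adj_of_rel (chain_ne (show (k:ℕ) ≠ (k:ℕ)+1 by omega))
      ⟨rfl, show (k:ℕ)+1 ≠ n by omega⟩) w, by simp [hw]⟩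

lemma walk_chain_high (h2 : 2 ≤ n) : ∀ d (k : Fin (2*n)), n + d = (k:ℕ) →
    ∃ w : (Gphi n m φ).Walk (Vert.chain ⟨n, by omega⟩) (Vert.chain k), w.length = d := by
  intro d
  induction d with
  | zero =>
    intro k hk
    obtain ⟨kv, hv⟩ := k
    have hk2 : n + 0 = kv := hk
    obtain rfl : kv = n := by omega
    exact ⟨.nil, rfl⟩
  | succ d ih =>
    intro k hk
    have hk1 : n + d < 2*n := by omega
    obtain ⟨w, hw⟩ := ih ⟨n+d, hk1⟩ (by simp)
    refine ⟨w.concat (adj_of_rel (chain_ne (show n+d ≠ (k:ℕ) by omega))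
      ⟨show n+d+1 = (k:ℕ) by omega, show (k:ℕ) ≠ n by omega⟩), by simp [hw]⟩

lemma walk_lit : ∀ d (i i' : Fin n) (b b' : Bool), (i:ℕ) + (d+1) = (i':ℕ) →
    ∃ w : (Gphi n m φ).Walk (Vert.lit i b) (Vert.lit i' b'), w.length = d + 1 := by
  intro d
  induction d with
  | zero =>
    intro i i' b b' h
    have hadj : (Gphi n m φ).Adj (Vert.lit i b) (Vert.lit i' b') :=
      adj_of_rel (lit_ne (Or.inl (by omega))) (Or.inr (by omega))
    exact ⟨.cons hadj .nil, by simp⟩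
  | succ d ih =>
    intro i i' b b' h
    have hi1 : (i:ℕ)+1 < n := by have := i'.isLt; omega
    obtain ⟨w, hw⟩ := ih ⟨(i:ℕ)+1, hi1⟩ i' b b' (by simp; omega)
    refine ⟨.cons (adj_of_rel (lit_ne (Or.inl (show (i:ℕ) ≠ (i:ℕ)+1 by omega)))
      (Or.inr rfl)) w, by simp [hw]⟩

lemma litlit (h2 : 2 ≤ n) (i i' : Fin n) (b b' : Bool) :
    ∃ w : (Gphi n m φ).Walk (Vert.lit i b) (Vert.lit i' b'), w.length ≤ n - 1 := by
  rcases Nat.lt_trichotomy (i:ℕ) (i':ℕ) with h | h | h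
  · obtain ⟨w, hw⟩ := walk_lit ((i':ℕ) - (i:ℕ) - 1) i i' b b' (by omega)
    exact ⟨w, by have := i'.isLt; omega⟩
  · by_cases hb : b = b'
    · subst hb
      have : i = i' := Fin.ext h
      subst this
      exact ⟨.nil, Nat.zero_le _⟩
    · have hii : i = i' := Fin.ext h
      subst hii
      have hadj : (Gphi n m φ).Adj (Vert.lit i b) (Vert.lit i b') :=
        adj_of_rel (lit_ne (Or.inr hb)) (Or.inl ⟨rfl, hb⟩)
      exact ⟨.cons hadj .nil, by simp; omega⟩
  · obtain ⟨w, hw⟩ := walk_lit ((i:ℕ) - (i':ℕ) - 1) i' i b' b (by omega)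
    exact ⟨w.reverse, by have := i.isLt; simp [hw]; omega⟩

lemma inner_to_lit : ∀ d (j : Fin m) (t : Fin 3) (s : Fin (n/2)), (s:ℕ) + d = n/2 - 1 →
    ∃ w : (Gphi n m φ).Walk (Vert.inner j t s) (Vert.lit (φ j t).1 (φ j t).2),
      w.length = d + 1 := by
  intro d
  induction d with
  | zero =>
    intro j t s hs
    have hadj : (Gphi n m φ).Adj (Vert.inner j t s) (Vert.lit (φ j t).1 (φ j t).2) :=
      adj_of_rel (by simp) ⟨by omega, rfl⟩
    exact ⟨.cons hadj .nil, by simp⟩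
  | succ d ih =>
    intro j t s hs
    have hs1 : (s:ℕ)+1 < n/2 := by have := s.isLt; omega
    obtain ⟨w, hw⟩ := ih j t ⟨(s:ℕ)+1, hs1⟩ (by simp; omega)
    refine ⟨.cons (adj_of_rel (inner_ne (show (s:ℕ) ≠ (s:ℕ)+1 by omega))
      ⟨rfl, rfl, rfl⟩) w, by simp [hw]⟩

lemma clause_to_lit (h4 : 4 ≤ n) (j : Fin m) (t : Fin 3) :
    ∃ w : (Gphi n m φ).Walk (Vert.clause j) (Vert.lit (φ j t).1 (φ j t).2),
      w.length = n/2 + 1 := by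
  have hpos : 0 < n/2 := by omega
  obtain ⟨w, hw⟩ := inner_to_lit (n/2 - 1) j t ⟨0, hpos⟩ (by simp)
  have hadj : (Gphi n m φ).Adj (Vert.clause j) (Vert.inner j t ⟨0, hpos⟩) :=
    adj_of_rel (by simp) ⟨rfl, rfl⟩
  exact ⟨.cons hadj w, by simp [hw]; omega⟩

lemma toLit (h4 : 4 ≤ n) (u : Vert n m) :
    ∃ (i : Fin n) (b : Bool) (w : (Gphi n m φ).Walk u (Vert.lit i b)), w.length ≤ n := by
  cases u with
  | lit i b => exact ⟨i, b, .nil, by simp⟩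
  | chain k =>
    by_cases hk : (k:ℕ) < n
    · obtain ⟨w, hw⟩ := walk_chain_low (by omega) (n - 1 - (k:ℕ)) k (by omega)
      refine ⟨⟨0, by omega⟩, true, w.concat (adj_of_rel (by simp)
        (Or.inl ⟨by simp, rfl⟩)), by simp [hw]; omega⟩
    · obtain ⟨w, hw⟩ := walk_chain_high (by omega) ((k:ℕ) - n) k (by omega)
      refine ⟨⟨n-1, by omega⟩, true, w.reverse.concat (adj_of_rel (by simp)
        (Or.inr ⟨by simp, by simp⟩)), by have := k.isLt; simp [hw]; omega⟩
  | clause j =>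
    obtain ⟨w, hw⟩ := clause_to_lit h4 j 0
    exact ⟨_, _, w, by omega⟩
  | inner j t s =>
    obtain ⟨w, hw⟩ := inner_to_lit (n/2 - 1 - (s:ℕ)) j t s (by have := s.isLt; omega)
    exact ⟨_, _, w, by have := s.isLt; omega⟩

lemma upperWalk (h4 : 4 ≤ n) (u v : Vert n m) :
    ∃ w : (Gphi n m φ).Walk u v, w.length ≤ 3*n - 1 := by
  obtain ⟨i, b, w1, h1⟩ := toLit (φ := φ) h4 u
  obtain ⟨i', b', w2, h2⟩ := toLit (φ := φ) h4 v
  obtain ⟨w3, h3⟩ := litlit (φ := φ) (by omega) i i' b b'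
  exact ⟨w1.append (w3.append w2.reverse), by simp; omega⟩

def pot (φ : Fin m → Fin 3 → Fin n × Bool) : Vert n m → ℕ
  | .lit i _ => n + (i:ℕ)
  | .chain k => if (k:ℕ) < n then (k:ℕ) else (k:ℕ) + n
  | .clause _ => n + n/2
  | .inner j t s =>
      if ((φ j t).1 : ℕ) ≤ n/2
      then max (n + ((φ j t).1:ℕ)) (n + n/2 - ((s:ℕ)+1))
      else min (n + ((φ j t).1:ℕ)) (n + n/2 + ((s:ℕ)+1))

lemma pot_rel (h4 : 4 ≤ n) (he : n % 2 = 0) {u v : Vert n m} (h : satRel n m φ u v) :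
    pot φ u ≤ pot φ v + 1 ∧ pot φ v ≤ pot φ u + 1 := by
  cases u <;> cases v <;> simp only [satRel] at h
  case lit.lit i b i' b' =>
    obtain ⟨rfl, -⟩ | h := h <;> simp only [pot] <;> omega
  case chain.chain k k' =>
    simp only [pot]; split_ifs <;> omega
  case chain.lit k i b =>
    simp only [pot]; split_ifs <;> omega
  case clause.inner j j' t s =>
    simp only [pot]; split_ifs <;> omega
  case inner.inner j t s j' t' s' =>
    obtain ⟨rfl, rfl, hs⟩ := h
    simp only [pot]; split_ifs <;> omega
  case inner.lit j t s i b =>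
    obtain ⟨hs, hφ⟩ := h
    have h1 : ((φ j t).1 : ℕ) = (i:ℕ) := by rw [hφ]
    have h2 := i.isLt
    have h3 := s.isLt
    simp only [pot]; split_ifs <;> omega

lemma pot_walk (h4 : 4 ≤ n) (he : n % 2 = 0) {u v : Vert n m}
    (w : (Gphi n m φ).Walk u v) :
    pot φ u ≤ pot φ v + w.length ∧ pot φ v ≤ pot φ u + w.length := by
  induction w with
  | nil => simp
  | cons h p ih =>
    obtain ⟨-, hr | hr⟩ := (SimpleGraph.fromRel_adj _ _ _).mp h <;>
      have := pot_rel h4 he hr <;> simp only [SimpleGraph.Walk.length_cons] <;> omega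

lemma pot_chain (k : Fin (2*n)) :
    pot φ (Vert.chain k) = if (k:ℕ) < n then (k:ℕ) else (k:ℕ) + n := rfl

lemma dist_eq (h4 : 4 ≤ n) (he : n % 2 = 0) (hconn : (Gphi n m φ).Connected)
    (k0 k1 : Fin (2*n)) (h0 : (k0:ℕ) = 0) (h1 : (k1:ℕ) = 2*n-1) :
    (Gphi n m φ).dist (Vert.chain k0) (Vert.chain k1) = 3*n-1 := by
  have hpot0 : pot φ (Vert.chain k0) = 0 := by rw [pot_chain, if_pos (by omega)]; omega
  have hpot1 : pot φ (Vert.chain k1) = 3*n-1 := by rw [pot_chain, if_neg (by omega)]; omega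
  obtain ⟨wu, hwu⟩ := upperWalk (φ := φ) h4 (Vert.chain k0) (Vert.chain k1)
  have hle : (Gphi n m φ).dist (Vert.chain k0) (Vert.chain k1) ≤ 3*n-1 :=
    le_trans (SimpleGraph.dist_le wu) hwu
  obtain ⟨wd, hwd⟩ := SimpleGraph.Reachable.exists_walk_length_eq_dist
    (hconn.preconnected (Vert.chain k0) (Vert.chain k1))
  have hpw := pot_walk h4 he wd
  rw [← hwd] at hle ⊢
  omega

end GphiAux

set_option maxHeartbeats 1000000 in
/-- For every 3SAT formula `φ` on `n` boolean variables (`n` even, `n ≥ 4`), the graph `G(φ)`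
is connected and `diam G(φ) = 3n − 1 = d(V₁, V_{2n})`. -/
theorem Gphi_connected_and_diam (n m : ℕ) (hn : Even n) (h4 : 4 ≤ n)
    (φ : Fin m → Fin 3 → Fin n × Bool) :
    (Gphi n m φ).Connected ∧
    (Gphi n m φ).diam = 3 * n - 1 ∧
    (Gphi n m φ).dist (Vert.chain ⟨0, by omega⟩) (Vert.chain ⟨2 * n - 1, by omega⟩)
      = 3 * n - 1 := by
  have he : n % 2 = 0 := Nat.even_iff.mp hn
  have hconn : (Gphi n m φ).Connected := by
    rw [connected_iff]
    refine ⟨fun u v => ?_, ⟨Vert.chain ⟨0, by omega⟩⟩⟩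
    obtain ⟨w, -⟩ := GphiAux.upperWalk (φ := φ) h4 u v
    exact w.reachable
  have hdist := GphiAux.dist_eq (φ := φ) h4 he hconn
    ⟨0, by omega⟩ ⟨2*n-1, by omega⟩ rfl rfl
  have hreach : (Gphi n m φ).edist (Vert.chain ⟨0, by omega⟩ : Vert n m)
      (Vert.chain ⟨2*n-1, by omega⟩) ≠ ⊤ :=
    (SimpleGraph.edist_ne_top_iff_reachable).mpr (hconn.preconnected _ _)
  have hediam : (Gphi n m φ).ediam = ((3*n-1 : ℕ) : ℕ∞) := by
    apply le_antisymm
    · apply SimpleGraph.ediam_le_of_edist_le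
      intro u v
      obtain ⟨w, hw⟩ := GphiAux.upperWalk (φ := φ) h4 u v
      exact le_trans (SimpleGraph.edist_le w) (Nat.cast_le.mpr hw)
    · calc ((3*n-1 : ℕ) : ℕ∞)
          = (Gphi n m φ).edist (Vert.chain ⟨0, by omega⟩) (Vert.chain ⟨2*n-1, by omega⟩) := by
            rw [← hdist]; exact ENat.coe_toNat hreach
        _ ≤ (Gphi n m φ).ediam := SimpleGraph.edist_le_ediam
  refine ⟨hconn, ?_, hdist⟩
  rw [SimpleGraph.diam, hediam, ENat.toNat_coe]
end

section
/- For every 3SAT formula φ on n boolean variables (n even, n ≥ 4) and every pair of clause vertices C_j, C_{j'} of G(φ), one has d(C_j, C_{j'}) ≤ 2(n/2 + 1) + n = 2n + 2. -/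
open SimpleGraph

section Aux

variable {n m : ℕ} (φ : Fin m → Fin 3 → Fin n × Bool)

lemma Gphi_adj_of_rel {a b : Vert n m} (hne : a ≠ b) (h : satRel n m φ a b) :
    (Gphi n m φ).Adj a b := by
  rw [Gphi, SimpleGraph.fromRel_adj]
  exact ⟨hne, Or.inl h⟩

lemma adj_lit_succ {i i' : Fin n} (b b' : Bool) (h : (i : ℕ) + 1 = (i' : ℕ)) :
    (Gphi n m φ).Adj (.lit i b) (.lit i' b') := by
  refine Gphi_adj_of_rel φ ?_ (Or.inr h)
  intro he
  injection he with h1 h2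
  apply absurd (congrArg Fin.val h1)
  omega

lemma adj_lit_flip {i : Fin n} {b b' : Bool} (h : b ≠ b') :
    (Gphi n m φ).Adj (.lit i b) (.lit i b') := by
  refine Gphi_adj_of_rel φ ?_ (Or.inl ⟨rfl, h⟩)
  intro he
  injection he with h1 h2
  exact h h2

/-- Walk going up the literal grid. -/
lemma walk_lit_up (d : ℕ) :
    ∀ (i i' : Fin n) (b b' : Bool), (i : ℕ) + d = (i' : ℕ) →
    ∃ p : (Gphi n m φ).Walk (.lit i b) (.lit i' b'), p.length ≤ d + 1 := by
  induction d with
  | zero =>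
    intro i i' b b' h
    have hii : i = i' := Fin.ext (by omega)
    subst hii
    by_cases hb : b = b'
    · subst hb; exact ⟨.nil, by simp⟩
    · exact ⟨.cons (adj_lit_flip φ hb) .nil, by simp⟩
  | succ d ih =>
    intro i i' b b' h
    have hi1 : (i : ℕ) + 1 < n := by have := i'.isLt; omega
    obtain ⟨p, hp⟩ := ih ⟨(i : ℕ) + 1, hi1⟩ i' b b' (by simp; omega)
    exact ⟨.cons (adj_lit_succ φ b b rfl) p, by simpa using Nat.succ_le_succ hp⟩

/-- Between any two literal vertices there is a walk of length at most `n`. -/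
lemma walk_lit_any (hn1 : 1 ≤ n) (i i' : Fin n) (b b' : Bool) :
    ∃ p : (Gphi n m φ).Walk (.lit i b) (.lit i' b'), p.length ≤ n := by
  rcases le_total (i : ℕ) (i' : ℕ) with hle | hle
  · obtain ⟨p, hp⟩ := walk_lit_up φ ((i' : ℕ) - (i : ℕ)) i i' b b' (by omega)
    exact ⟨p, by have := i'.isLt; omega⟩
  · obtain ⟨p, hp⟩ := walk_lit_up φ ((i : ℕ) - (i' : ℕ)) i' i b' b (by omega)
    exact ⟨p.reverse, by rw [SimpleGraph.Walk.length_reverse]; have := i.isLt; omega⟩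

/-- Walk from a clause vertex down its `t`-th pendant path. -/
lemma walk_clause_inner (j : Fin m) (t : Fin 3) :
    ∀ (s : ℕ) (hs : s < n / 2),
    ∃ p : (Gphi n m φ).Walk (.clause j) (.inner j t ⟨s, hs⟩), p.length = s + 1 := by
  intro s
  induction s with
  | zero =>
    intro hs
    have ha : (Gphi n m φ).Adj (.clause j) (.inner j t ⟨0, hs⟩) :=
      Gphi_adj_of_rel φ (fun he => by cases he) ⟨rfl, rfl⟩
    exact ⟨.cons ha .nil, by simp⟩
  | succ s ih =>
    intro hs
    obtain ⟨p, hp⟩ := ih (by omega)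
    have ha : (Gphi n m φ).Adj (.inner j t ⟨s, by omega⟩) (.inner j t ⟨s + 1, hs⟩) := by
      refine Gphi_adj_of_rel φ ?_ ⟨rfl, rfl, rfl⟩
      intro he
      injection he with h1 h2 h3
      apply absurd (congrArg Fin.val h3)
      simp
    exact ⟨p.concat ha, by rw [SimpleGraph.Walk.length_concat, hp]⟩

/-- Walk of length `n/2 + 1` from a clause vertex to one of its literal vertices. -/
lemma walk_clause_lit (hn2 : 1 ≤ n / 2) (j : Fin m) (t : Fin 3) :
    ∃ p : (Gphi n m φ).Walk (.clause j) (.lit (φ j t).1 (φ j t).2),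
      p.length = n / 2 + 1 := by
  obtain ⟨p, hp⟩ := walk_clause_inner φ j t (n / 2 - 1) (by omega)
  have ha : (Gphi n m φ).Adj (.inner j t ⟨n / 2 - 1, by omega⟩) (.lit (φ j t).1 (φ j t).2) := by
    exact Gphi_adj_of_rel φ (fun he => by cases he) ⟨rfl, rfl⟩
  exact ⟨p.concat ha, by rw [SimpleGraph.Walk.length_concat, hp]; omega⟩

end Aux

/-- For every 3SAT formula `φ` on `n` boolean variables (`n` even, `n ≥ 4`) and every pair of
clause vertices `C_j`, `C_{j'}` of `G(φ)`, one has `d(C_j, C_{j'}) ≤ 2(n/2 + 1) + n = 2n + 2`. -/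
theorem Gphi_dist_clause_le (n m : ℕ) (hn : Even n) (h4 : 4 ≤ n)
    (φ : Fin m → Fin 3 → Fin n × Bool) (j j' : Fin m) :
    (Gphi n m φ).dist (Vert.clause j) (Vert.clause j') ≤ 2 * (n / 2 + 1) + n ∧
    2 * (n / 2 + 1) + n = 2 * n + 2 := by
  have hn2 : 1 ≤ n / 2 := by omega
  obtain ⟨p1, hp1⟩ := walk_clause_lit φ hn2 j 0
  obtain ⟨p3, hp3⟩ := walk_clause_lit φ hn2 j' 0
  obtain ⟨p2, hp2⟩ := walk_lit_any φ (by omega) (φ j 0).1 (φ j' 0).1 (φ j 0).2 (φ j' 0).2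
  constructor
  · calc (Gphi n m φ).dist (Vert.clause j) (Vert.clause j')
        ≤ ((p1.append p2).append p3.reverse).length := SimpleGraph.dist_le _
      _ ≤ 2 * (n / 2 + 1) + n := by
          simp [SimpleGraph.Walk.length_append, SimpleGraph.Walk.length_reverse, hp1, hp3]
          omega
  · obtain ⟨k, hk⟩ := hn
    omega
end
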